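/- Let H be a separable infinite-dimensional complex Hilbert space and let S ∈ B(H) satisfy [S, T] ∈ F(H) for every compact operator T ∈ K(H). Then [S, X] ∈ F(H) for every bounded operator X ∈ B(H); moreover, the ranks of all these commutators are bounded by a single uniform integer R. -/

import Mathlib

open scoped InnerProductSpace
open Metric Set Filter Topology

set_option linter.unusedSectionVars false
set_option linter.unusedVariables false
set_option maxHeartbeats 1000000

section Aux

variable {H : Type*} [NormedAddCommGroup H] [InnerProductSpace ℂ H] [CompleteSpace H]

/-- The determinant test matrix. -/
noncomputable def detMat (A : H →L[ℂ] H) (n : ℕ) (x y : Fin (n + 1) → H) :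
    Matrix (Fin (n + 1)) (Fin (n + 1)) ℂ :=
  Matrix.of fun i j => ⟪y j, A (x i)⟫_ℂ

lemma det_eq_zero_of_rank_le {A : H →L[ℂ] H} {n : ℕ}
    (h : Module.rank ℂ (LinearMap.range (A : H →ₗ[ℂ] H)) ≤ n)
    (x y : Fin (n + 1) → H) : (detMat A n x y).det = 0 := by
  have hdep : ¬ LinearIndependent ℂ (fun i : Fin (n + 1) =>
      (⟨A (x i), LinearMap.mem_range_self _ (x i)⟩ : LinearMap.range (A : H →ₗ[ℂ] H))) := by
    intro hli
    have h1 := hli.cardinal_lift_le_rank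
    have h2 : Cardinal.lift.{_} (Module.rank ℂ (LinearMap.range (A : H →ₗ[ℂ] H)))
        ≤ Cardinal.lift.{_} (n : Cardinal) := Cardinal.lift_le.mpr h
    have := h1.trans h2
    simp only [Cardinal.mk_fintype, Fintype.card_fin, Cardinal.lift_natCast,
      Nat.cast_le] at this
    omega
  rw [Fintype.linearIndependent_iff] at hdep
  push_neg at hdep
  obtain ⟨c, hc, i₀, hi₀⟩ := hdep
  rw [← Matrix.exists_vecMul_eq_zero_iff]
  refine ⟨c, fun hc0 => hi₀ (by rw [hc0]; rfl), ?_⟩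
  funext j
  have hsum : ∑ i, c i • A (x i) = 0 := by
    have := congrArg (Submodule.subtype _) hc
    simpa using this
  simp only [Matrix.vecMul, dotProduct, detMat, Matrix.of_apply, Pi.zero_apply]
  calc ∑ i, c i * ⟪y j, A (x i)⟫_ℂ = ⟪y j, ∑ i, c i • A (x i)⟫_ℂ := by
        rw [inner_sum]; simp [inner_smul_right]
    _ = 0 := by rw [hsum, inner_zero_right]

lemma rank_le_of_det_eq_zero {A : H →L[ℂ] H} {n : ℕ}
    (h : ∀ x y : Fin (n + 1) → H, (detMat A n x y).det = 0) :
    Module.rank ℂ (LinearMap.range (A : H →ₗ[ℂ] H)) ≤ n := by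
  apply rank_le
  intro s hs
  by_contra hcard
  push_neg at hcard
  -- extract an independent family of size n+1 in H
  obtain ⟨f⟩ := Function.Embedding.nonempty_of_card_le (α := Fin (n + 1)) (β := s)
    (by simpa [Fintype.card_coe] using hcard)
  have hli : LinearIndependent ℂ (fun i : Fin (n + 1) => ((f i : LinearMap.range (A : H →ₗ[ℂ] H)) : H)) := by
    have h1 : LinearIndependent ℂ (fun i : s => (i : LinearMap.range (A : H →ₗ[ℂ] H))) := hs
    have h2 := h1.comp f f.injective
    exact h2.map' (Submodule.subtype _) (Submodule.ker_subtype _)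
  -- choose preimages
  have hpre : ∀ i : Fin (n + 1), ∃ z : H, A z = ((f i : LinearMap.range (A : H →ₗ[ℂ] H)) : H) :=
    fun i => (f i : LinearMap.range (A : H →ₗ[ℂ] H)).2
  choose x hx using hpre
  set v : Fin (n + 1) → H := fun i => A (x i) with hv
  have hliv : LinearIndependent ℂ v := by
    convert hli using 1
    funext i; exact hx i
  -- use the Gram matrix
  have hdet := h x v
  rw [← Matrix.exists_mulVec_eq_zero_iff] at hdet
  obtain ⟨c, hc, hMc⟩ := hdet
  set w : H := ∑ j, (starRingEnd ℂ) (c j) • v j with hw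
  have hwv : ∀ i, ⟪w, v i⟫_ℂ = 0 := by
    intro i
    have := congrFun hMc i
    simp only [Matrix.mulVec, dotProduct, detMat, Matrix.of_apply, Pi.zero_apply] at this
    rw [hw, sum_inner]
    simpa [inner_smul_left, mul_comm] using this
  have hww : w = 0 := by
    have : ⟪w, w⟫_ℂ = 0 := by
      rw [hw, inner_sum]
      simp only [inner_smul_right]
      refine Finset.sum_eq_zero fun i _ => ?_
      rw [hwv i, mul_zero]
    exact inner_self_eq_zero.mp this
  have := Fintype.linearIndependent_iff.mp hliv (fun j => (starRingEnd ℂ) (c j)) (by rw [← hw, hww])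
  apply hc
  funext j
  have := this j
  simpa using congrArg (starRingEnd ℂ) this

lemma detMat_det_eq_zero_of_tendsto {n : ℕ} {A : H →L[ℂ] H} {T : ℕ → H →L[ℂ] H}
    (hT : ∀ v, Tendsto (fun m => T m v) atTop (𝓝 (A v)))
    (h0 : ∀ m, ∀ x y : Fin (n + 1) → H, (detMat (T m) n x y).det = 0)
    (x y : Fin (n + 1) → H) : (detMat A n x y).det = 0 := by
  have hmat : Tendsto (fun m => detMat (T m) n x y) atTop (𝓝 (detMat A n x y)) := by
    apply tendsto_pi_nhds.mpr
    intro i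
    rw [tendsto_pi_nhds]
    intro j
    exact ((continuous_const.inner continuous_id).tendsto _).comp (hT (x i))
  have hdet : Tendsto (fun m => (detMat (T m) n x y).det) atTop (𝓝 (detMat A n x y).det) :=
    ((Continuous.matrix_det continuous_id).tendsto _).comp hmat
  have : Tendsto (fun m => (detMat (T m) n x y).det) atTop (𝓝 0) := by
    simpa [h0] using tendsto_const_nhds (α := ℂ) (x := 0) (f := atTop (α := ℕ))
  exact tendsto_nhds_unique hdet this

lemma isClosed_detZero (n : ℕ) :
    IsClosed {A : H →L[ℂ] H | ∀ x y : Fin (n + 1) → H, (detMat A n x y).det = 0} := by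
  refine IsSeqClosed.isClosed ?_
  intro T A hTmem hTA
  have hT : ∀ v, Tendsto (fun m => T m v) atTop (𝓝 (A v)) := fun v =>
    ((ContinuousLinearMap.apply ℂ H v).continuous.tendsto _).comp hTA
  exact detMat_det_eq_zero_of_tendsto hT hTmem

lemma isCompactOperator_of_range_le' (T : H →L[ℂ] H) (U : Submodule ℂ H)
    [FiniteDimensional ℂ U] (h : ∀ v, T v ∈ U) : IsCompactOperator ⇑T := by
  refine ⟨Subtype.val '' (Metric.closedBall (0 : U) ‖T‖), ?_, ?_⟩
  · exact ((isCompact_closedBall _ _).image continuous_subtype_val)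
  · refine Filter.mem_of_superset (Metric.closedBall_mem_nhds 0 one_pos) ?_
    intro x hx
    refine ⟨⟨T x, h x⟩, ?_, rfl⟩
    simp only [Metric.mem_closedBall, dist_zero_right]
    calc ‖(⟨T x, h x⟩ : U)‖ = ‖T x‖ := rfl
      _ ≤ ‖T‖ * ‖x‖ := T.le_opNorm x
      _ ≤ ‖T‖ * 1 :=
          mul_le_mul_of_nonneg_left (mem_closedBall_zero_iff.mp hx) (norm_nonneg T)
      _ = ‖T‖ := mul_one _

lemma exists_compact_approx [TopologicalSpace.SeparableSpace H] (X : H →L[ℂ] H) :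
    ∃ T : ℕ → H →L[ℂ] H, (∀ m, IsCompactOperator ⇑(T m)) ∧
      ∀ v, Tendsto (fun m => T m v) atTop (𝓝 (X v)) := by
  haveI : Nonempty H := ⟨0⟩
  set d : ℕ → H := TopologicalSpace.denseSeq H with hd
  have hdense : DenseRange d := TopologicalSpace.denseRange_denseSeq H
  set U : ℕ → Submodule ℂ H := fun m => Submodule.span ℂ (d '' Iio m) with hU
  haveI : ∀ m, FiniteDimensional ℂ (U m) := fun m =>
    FiniteDimensional.span_of_finite ℂ ((finite_Iio m).image d)
  set P : ℕ → H →L[ℂ] H := fun m => (U m).subtypeL.comp ((U m).orthogonalProjectionOnto) with hPdef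
  have hPval : ∀ m v, P m v = ((U m).orthogonalProjectionOnto v : H) := fun m v => rfl
  have hPnorm : ∀ m (w : H), ‖P m w‖ ≤ ‖w‖ := by
    intro m w
    rw [hPval]
    calc ‖((U m).orthogonalProjectionOnto w : H)‖ = ‖(U m).orthogonalProjectionOnto w‖ := rfl
      _ ≤ ‖(U m).orthogonalProjectionOnto‖ * ‖w‖ := ((U m).orthogonalProjectionOnto).le_opNorm w
      _ ≤ 1 * ‖w‖ := mul_le_mul_of_nonneg_right (Submodule.orthogonalProjectionOnto_norm_le _) (norm_nonneg w)
      _ = ‖w‖ := one_mul _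
  have hP : ∀ v, Tendsto (fun m => P m v) atTop (𝓝 v) := by
    intro v
    rw [Metric.tendsto_atTop]
    intro ε hε
    obtain ⟨k, hk⟩ := hdense.exists_dist_lt v hε
    refine ⟨k + 1, fun m hm => ?_⟩
    have hdk : d k ∈ U m := Submodule.subset_span ⟨k, mem_Iio.mpr (by omega), rfl⟩
    have hmin : ‖v - P m v‖ = ⨅ w : U m, ‖v - w‖ := by
        rw [hPval, ← Submodule.starProjection_apply]; exact Submodule.starProjection_minimal v
    have hle : ‖v - P m v‖ ≤ ‖v - d k‖ := by
      rw [hmin]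
      exact ciInf_le ⟨0, fun r ⟨w, hw⟩ => hw ▸ norm_nonneg _⟩ (⟨d k, hdk⟩ : U m)
    rw [dist_comm, dist_eq_norm]
    calc ‖v - P m v‖ ≤ ‖v - d k‖ := hle
      _ = dist v (d k) := by rw [dist_eq_norm]
      _ < ε := hk
  refine ⟨fun m => P m * X * P m, fun m => ?_, fun v => ?_⟩
  · exact isCompactOperator_of_range_le' _ (U m)
      (fun v => by rw [show (P m * X * P m) v = P m (X (P m v)) from rfl, hPval]; exact
        Submodule.coe_mem _)
  · have h1 : Tendsto (fun m => X (P m v)) atTop (𝓝 (X v)) :=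
      (X.continuous.tendsto _).comp (hP v)
    rw [tendsto_iff_dist_tendsto_zero]
    refine squeeze_zero (fun m => dist_nonneg) (g := fun m =>
      ‖X (P m v) - X v‖ + dist (P m (X v)) (X v)) (fun m => ?_) ?_
    · have hsplit : dist ((P m * X * P m) v) (X v)
          ≤ dist (P m (X (P m v))) (P m (X v)) + dist (P m (X v)) (X v) :=
        dist_triangle _ _ _
      refine hsplit.trans (add_le_add_left ?_ _)
      rw [dist_eq_norm, ← map_sub]
      exact hPnorm m _
    · have h2 : Tendsto (fun m => ‖X (P m v) - X v‖) atTop (𝓝 0) := by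
        have := h1.sub (tendsto_const_nhds (x := X v))
        exact (tendsto_norm_zero.comp (by simpa using this))
      have h3 : Tendsto (fun m => dist (P m (X v)) (X v)) atTop (𝓝 0) :=
        tendsto_iff_dist_tendsto_zero.mp (hP (X v))
      simpa using h2.add h3

lemma exists_uniform_bound_on_compacts (S : H →L[ℂ] H)
    (hS : ∀ T : H →L[ℂ] H, IsCompactOperator ⇑T →
      FiniteDimensional ℂ (LinearMap.range ((S * T - T * S : H →L[ℂ] H) : H →ₗ[ℂ] H))) :
    ∃ n : ℕ, ∀ T : H →L[ℂ] H, IsCompactOperator ⇑T →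
      Module.rank ℂ (LinearMap.range ((S * T - T * S : H →L[ℂ] H) : H →ₗ[ℂ] H)) ≤ (2 * n : ℕ) := by
  classical
  set K := {T : H →L[ℂ] H // IsCompactOperator ⇑T} with hK
  haveI : CompleteSpace K :=
    (isClosed_setOf_isCompactOperator (σ₁₂ := RingHom.id ℂ) (M₁ := H) (M₂ := H)).completeSpace_coe
  haveI : Nonempty K := ⟨⟨0, show IsCompactOperator (0 : H → H) from isCompactOperator_zero⟩⟩
  set f : ℕ → Set K := fun n =>
    {T : K | ∀ x y : Fin (n + 1) → H, (detMat (S * T.1 - T.1 * S) n x y).det = 0} with hf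
  have hclosed : ∀ n, IsClosed (f n) := by
    intro n
    have hcont : Continuous fun T : K => S * T.1 - T.1 * S :=
      ((continuous_const.mul continuous_subtype_val).sub
        (continuous_subtype_val.mul continuous_const))
    exact (isClosed_detZero n).preimage hcont
  have hcover : (⋃ n, f n) = univ := by
    refine eq_univ_of_forall fun T => ?_
    haveI := hS T.1 T.2
    refine mem_iUnion.mpr ⟨Module.finrank ℂ (LinearMap.range ((S * T.1 - T.1 * S : H →L[ℂ] H) : H →ₗ[ℂ] H)), ?_⟩
    intro x y
    exact det_eq_zero_of_rank_le (by rw [← Module.finrank_eq_rank]) x y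
  obtain ⟨n, hn⟩ := nonempty_interior_of_iUnion_of_closed hclosed hcover
  obtain ⟨T₀, hT₀⟩ := hn
  obtain ⟨ε, hε, hball⟩ := Metric.isOpen_iff.mp isOpen_interior T₀ hT₀
  have hball' : ball T₀ ε ⊆ f n := hball.trans interior_subset
  refine ⟨n, fun T hT => ?_⟩
  by_cases hT0 : T = 0
  · subst hT0
    have h1 : (S * 0 - 0 * S : H →L[ℂ] H) = 0 := by simp
    rw [h1, show ((0 : H →L[ℂ] H) : H →ₗ[ℂ] H) = 0 from rfl, LinearMap.range_zero, rank_bot]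
    exact zero_le
  · have hTnorm : (0 : ℝ) < ‖T‖ := norm_pos_iff.mpr hT0
    set c : ℝ := ε / (2 * ‖T‖) with hc
    have hcpos : 0 < c := div_pos hε (by positivity)
    set T₁ : K := ⟨T₀.1 + (c : ℂ) • T, by
      refine T₀.2.add ?_
      have := hT.smul (c : ℂ)
      rwa [show (c : ℂ) • ⇑T = ⇑((c : ℂ) • T) from rfl] at this⟩ with hT₁
    have hmem₁ : T₁ ∈ f n := by
      apply hball'
      rw [mem_ball, Subtype.dist_eq, dist_eq_norm]
      have : T₁.1 - T₀.1 = (c : ℂ) • T := by rw [hT₁]; ring_nf; abel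
      rw [this, norm_smul]
      simp only [Complex.norm_real, Real.norm_eq_abs, abs_of_pos hcpos]
      rw [hc]
      rw [div_mul_eq_mul_div, mul_comm]
      rw [div_lt_iff₀ (by positivity)]
      nlinarith
    have hmem₀ : T₀ ∈ f n := hball' (mem_ball_self hε)
    have hrank₁ : Module.rank ℂ (LinearMap.range ((S * T₁.1 - T₁.1 * S : H →L[ℂ] H) : H →ₗ[ℂ] H)) ≤ n :=
      rank_le_of_det_eq_zero hmem₁
    have hrank₀ : Module.rank ℂ (LinearMap.range ((S * T₀.1 - T₀.1 * S : H →L[ℂ] H) : H →ₗ[ℂ] H)) ≤ n :=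
      rank_le_of_det_eq_zero hmem₀
    -- (c:ℂ) • (S*T - T*S) = (S*T₁ - T₁*S) - (S*T₀ - T₀*S)
    have key : ((c : ℂ) • (S * T - T * S) : H →L[ℂ] H)
        = (S * T₁.1 - T₁.1 * S) - (S * T₀.1 - T₀.1 * S) := by
      rw [hT₁]
      simp only [mul_add, add_mul, mul_smul_comm, smul_mul_assoc, smul_sub]
      abel
    have hc0 : (c : ℂ) ≠ 0 := by exact_mod_cast hcpos.ne'
    have hrange : LinearMap.range ((S * T - T * S : H →L[ℂ] H) : H →ₗ[ℂ] H)
        = LinearMap.range (((c : ℂ) • (S * T - T * S) : H →L[ℂ] H) : H →ₗ[ℂ] H) := by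
      rw [ContinuousLinearMap.coe_smul, LinearMap.range_smul _ _ hc0]
    rw [hrange, key]
    have hsub : ((S * T₁.1 - T₁.1 * S) - (S * T₀.1 - T₀.1 * S) : H →L[ℂ] H)
        = (S * T₁.1 - T₁.1 * S) + (-(S * T₀.1 - T₀.1 * S)) := by abel
    rw [hsub]
    have hadd := LinearMap.rank_add_le ((S * T₁.1 - T₁.1 * S : H →L[ℂ] H) : H →ₗ[ℂ] H)
      ((-(S * T₀.1 - T₀.1 * S) : H →L[ℂ] H) : H →ₗ[ℂ] H)
    have hneg : Module.rank ℂ (LinearMap.range ((-(S * T₀.1 - T₀.1 * S) : H →L[ℂ] H) : H →ₗ[ℂ] H))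
        = Module.rank ℂ (LinearMap.range ((S * T₀.1 - T₀.1 * S : H →L[ℂ] H) : H →ₗ[ℂ] H)) := by
      rw [show ((-(S * T₀.1 - T₀.1 * S) : H →L[ℂ] H) : H →ₗ[ℂ] H)
        = -((S * T₀.1 - T₀.1 * S : H →L[ℂ] H) : H →ₗ[ℂ] H) from rfl, LinearMap.range_neg]
    calc Module.rank ℂ (LinearMap.range (((S * T₁.1 - T₁.1 * S) + (-(S * T₀.1 - T₀.1 * S)) : H →L[ℂ] H) : H →ₗ[ℂ] H))
        ≤ Module.rank ℂ (LinearMap.range ((S * T₁.1 - T₁.1 * S : H →L[ℂ] H) : H →ₗ[ℂ] H))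
          + Module.rank ℂ (LinearMap.range ((-(S * T₀.1 - T₀.1 * S) : H →L[ℂ] H) : H →ₗ[ℂ] H)) := hadd
      _ ≤ (n : Cardinal) + n := by rw [hneg]; exact add_le_add hrank₁ hrank₀
      _ = ((2 * n : ℕ) : Cardinal) := by rw [two_mul]; norm_cast

end Aux


/-- A continuous linear operator has finite rank, i.e. finite-dimensional range. -/
def IsFiniteRank {H : Type*} [NormedAddCommGroup H] [InnerProductSpace ℂ H]
    (T : H →L[ℂ] H) : Prop :=
  FiniteDimensional ℂ (LinearMap.range (T : H →ₗ[ℂ] H))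

/-- If `S ∈ B(H)` has finite-rank commutator with every compact operator, then `[S, X]` is
finite-rank for every bounded operator `X`, with all the ranks bounded by a single uniform
integer `R`. -/
theorem finite_rank_commutators_extend_to_bounded_operators
    (H : Type*) [NormedAddCommGroup H] [InnerProductSpace ℂ H] [CompleteSpace H]
    [TopologicalSpace.SeparableSpace H] (hinf : ¬ FiniteDimensional ℂ H)
    (S : H →L[ℂ] H)
    (hS : ∀ T : H →L[ℂ] H, IsCompactOperator ⇑T → IsFiniteRank (S * T - T * S)) :
    (∀ X : H →L[ℂ] H, IsFiniteRank (S * X - X * S)) ∧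
      ∃ R : ℕ, ∀ X : H →L[ℂ] H,
        LinearMap.rank ((S * X - X * S : H →L[ℂ] H) : H →ₗ[ℂ] H) ≤ (R : Cardinal) := by
  obtain ⟨n, hn⟩ := exists_uniform_bound_on_compacts S (fun T hT => hS T hT)
  have key : ∀ X : H →L[ℂ] H,
      Module.rank ℂ (LinearMap.range ((S * X - X * S : H →L[ℂ] H) : H →ₗ[ℂ] H))
        ≤ ((2 * n : ℕ) : Cardinal) := by
    intro X
    obtain ⟨T, hTc, hTtend⟩ := exists_compact_approx X
    have hT0 : ∀ m, ∀ x y : Fin (2 * n + 1) → H,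
        (detMat (S * T m - T m * S) (2 * n) x y).det = 0 := fun m =>
      det_eq_zero_of_rank_le (hn (T m) (hTc m))
    have hT' : ∀ v, Filter.Tendsto (fun m => (S * T m - T m * S) v)
        Filter.atTop (nhds ((S * X - X * S) v)) := by
      intro v
      have e1 : ∀ m, (S * T m - T m * S) v = S (T m v) - T m (S v) := fun m => rfl
      have e2 : (S * X - X * S) v = S (X v) - X (S v) := rfl
      simp only [e1, e2]
      exact ((S.continuous.tendsto _).comp (hTtend v)).sub (hTtend (S v))
    exact rank_le_of_det_eq_zero (detMat_det_eq_zero_of_tendsto hT' hT0)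
  constructor
  · intro X
    exact Module.rank_lt_aleph0_iff.mp ((key X).trans_lt (Cardinal.nat_lt_aleph0 _))
  · exact ⟨2 * n, fun X => key X⟩
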